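/- Let X be a Banach space with a family (x_i)_{i∈I} in X and biorthogonal functionals (x_i^*)_{i∈I} in X* (x_i^*(x_j) = 1 if i = j and 0 otherwise), such that every f ∈ X* belongs to the weak-*-closed linear span of {x_i^* : i ∈ supp(f)}, where supp(f) = {i ∈ I : f(x_i) ≠ 0}. Let E ⊂ X* be norm-bounded and suppose there is a finite cardinal m such that card(supp(f)) = m for all f ∈ E. Then E is w*-LRC. -/

import Mathlib

open NormedSpace Filter Set Topology Pointwise Classical

noncomputable section

/-- `E ⊆ X*` is weak-* locally relatively norm-compact. -/
def IsWeakStarLRC {X : Type*} [NormedAddCommGroup X] [NormedSpace ℝ X]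
    (E : Set (StrongDual ℝ X)) : Prop :=
  ∀ y ∈ E, ∃ U : Set (WeakDual ℝ X), IsOpen U ∧ StrongDual.toWeakDual y ∈ U ∧
    IsCompact (closure (E ∩ (fun f : StrongDual ℝ X => StrongDual.toWeakDual f) ⁻¹' U))

theorem stmt12 {X I : Type*} [NormedAddCommGroup X] [NormedSpace ℝ X] [CompleteSpace X]
    (x : I → X) (xs : I → StrongDual ℝ X)
    (hbi : ∀ i j, xs i (x j) = if i = j then 1 else 0)
    (hstrong : ∀ f : StrongDual ℝ X, StrongDual.toWeakDual f ∈
      closure ((fun g : StrongDual ℝ X => StrongDual.toWeakDual g) ''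
        (Submodule.span ℝ (xs '' {i : I | f (x i) ≠ 0}) : Set (StrongDual ℝ X))))
    (E : Set (StrongDual ℝ X)) (hEbdd : Bornology.IsBounded E)
    (m : ℕ)
    (hcard : ∀ f ∈ E, {i : I | f (x i) ≠ 0}.Finite ∧ {i : I | f (x i) ≠ 0}.ncard = m) :
    IsWeakStarLRC E := by
  intro y hy
  obtain ⟨hSfin, hScard⟩ := hcard y hy
  set S : Set I := {i | y (x i) ≠ 0} with hSdef
  set U : Set (WeakDual ℝ X) := ⋂ i ∈ hSfin.toFinset, {g : WeakDual ℝ X | g (x i) ≠ 0} with hUdef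
  have hUopen : IsOpen U := by
    refine isOpen_biInter_finset fun i _ => ?_
    have : {g : WeakDual ℝ X | g (x i) ≠ 0} =
        (fun g : WeakDual ℝ X => g (x i)) ⁻¹' ({0}ᶜ) := rfl
    rw [this]
    exact (isOpen_compl_singleton).preimage (WeakDual.eval_continuous (x i))
  have hyU : StrongDual.toWeakDual y ∈ U := by
    simp only [hUdef, mem_iInter, Set.Finite.mem_toFinset, mem_setOf_eq]
    intro i hi
    exact hi
  refine ⟨U, hUopen, hyU, ?_⟩
  set V : Submodule ℝ (StrongDual ℝ X) := Submodule.span ℝ (xs '' S) with hVdef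
  have hVfd : FiniteDimensional ℝ V := FiniteDimensional.span_of_finite ℝ (hSfin.image xs)
  have key : E ∩ (fun f : StrongDual ℝ X => StrongDual.toWeakDual f) ⁻¹' U ⊆ (V : Set (StrongDual ℝ X)) := by
    rintro f ⟨hfE, hfU⟩
    have hSsub : S ⊆ {i | f (x i) ≠ 0} := by
      intro i hi
      have h : StrongDual.toWeakDual f ∈ U := hfU
      simp only [hUdef, mem_iInter, Set.Finite.mem_toFinset, mem_setOf_eq] at h
      exact h i hi
    obtain ⟨hffin, hfcard⟩ := hcard f hfE
    have hEq : S = {i | f (x i) ≠ 0} :=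
      Set.eq_of_subset_of_ncard_le hSsub (by rw [hfcard, hScard]) hffin
    have h1 := hstrong f
    rw [← hEq] at h1
    -- the image of V under toWeakDual is a closed submodule
    have hcl : IsClosed ((fun g : StrongDual ℝ X => StrongDual.toWeakDual g) '' (V : Set (StrongDual ℝ X))) := by
      have himg : (fun g : StrongDual ℝ X => StrongDual.toWeakDual g) '' (V : Set (StrongDual ℝ X)) =
          (V.map (StrongDual.toWeakDual (𝕜 := ℝ) (E := X)).toLinearMap : Set (WeakDual ℝ X)) := by
        simp [Submodule.map_coe]
      rw [himg]
      have : FiniteDimensional ℝ (V.map (StrongDual.toWeakDual (𝕜 := ℝ) (E := X)).toLinearMap) :=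
        Module.Finite.map _ _
      exact Submodule.closed_of_finiteDimensional _
    rw [hcl.closure_eq] at h1
    obtain ⟨g, hgV, hgf⟩ := h1
    have : g = f := StrongDual.toWeakDual.injective hgf
    rwa [← this]
  have hVclosed : IsClosed (V : Set (StrongDual ℝ X)) := Submodule.closed_of_finiteDimensional V
  have hsub : closure (E ∩ (fun f : StrongDual ℝ X => StrongDual.toWeakDual f) ⁻¹' U) ⊆
      (V : Set (StrongDual ℝ X)) := closure_minimal key hVclosed
  have hbdd : Bornology.IsBounded
      (closure (E ∩ (fun f : StrongDual ℝ X => StrongDual.toWeakDual f) ⁻¹' U)) :=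
    (hEbdd.subset inter_subset_left).closure
  set K := closure (E ∩ (fun f : StrongDual ℝ X => StrongDual.toWeakDual f) ⁻¹' U) with hK
  have hKcl : IsClosed K := isClosed_closure
  -- pull back to V, which is a proper space
  have hKV : (Subtype.val : V → StrongDual ℝ X) '' ((Subtype.val : V → StrongDual ℝ X) ⁻¹' K) = K := by
    exact Set.image_preimage_eq_of_subset (by simpa using hsub)
  rw [← hKV]
  refine IsCompact.image ?_ continuous_subtype_val
  have : ProperSpace V := FiniteDimensional.proper ℝ V
  refine Metric.isCompact_of_isClosed_isBounded (hKcl.preimage continuous_subtype_val) ?_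
  obtain ⟨r, hr⟩ := hbdd.subset_closedBall 0
  refine (Metric.isBounded_closedBall (x := (0 : V)) (r := r)).subset ?_
  intro v hv
  have := hr hv
  rw [Metric.mem_closedBall, Subtype.dist_eq]
  simpa [Metric.mem_closedBall, dist_zero_right] using this

end
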